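/- The empirical beta copula is obtained from the rank-based empirical copula by binomial smoothing: for all u ∈ [0,1]^d, ℂₙ^β(u) = E[C̃ₙ(S₁/n, …, S_d/n)], where S₁,…,S_d are independent with Sⱼ ~ Binomial(n, uⱼ). -/
import Mathlib


/-- `F_{n,r}(u) = Σ_{s=r}^{n} C(n,s) u^s (1−u)^{n−s}`, the CDF of the Beta(r, n+1−r)
distribution evaluated at `u` (via `P(U ≤ u) = P(S ≥ r)` for `S ~ Binomial(n,u)`). -/
noncomputable def betaCDF (n r : ℕ) (u : ℝ) : ℝ :=
  ∑ s ∈ Finset.Icc r n, (n.choose s : ℝ) * u ^ s * (1 - u) ^ (n - s)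

/-- The binomial probability mass function `P(S = k)` for `S ~ Binomial(n, p)`. -/
noncomputable def binomPMF (n : ℕ) (p : ℝ) (k : ℕ) : ℝ :=
  (n.choose k : ℝ) * p ^ k * (1 - p) ^ (n - k)

open scoped Classical in
/-- The rank-based empirical copula `C̃ₙ(u) = (1/n) Σᵢ ∏ⱼ 𝟙{R_{ij}/n ≤ uⱼ}`. -/
noncomputable def rankCopula (n d : ℕ) (R : Fin n → Fin d → ℕ) (u : Fin d → ℝ) : ℝ :=
  (1 / n) * ∑ i : Fin n, ∏ j : Fin d, if (R i j : ℝ) / n ≤ u j then (1 : ℝ) else 0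

/-- The empirical beta copula `ℂₙ^β(u) = (1/n) Σᵢ ∏ⱼ F_{n,R_{ij}}(uⱼ)`. -/
noncomputable def empBetaCopula (n d : ℕ) (R : Fin n → Fin d → ℕ) (u : Fin d → ℝ) : ℝ :=
  (1 / n) * ∑ i : Fin n, ∏ j : Fin d, betaCDF n (R i j) (u j)

lemma betaCDF_eq_sum_aux (n : ℕ) (hn : 1 ≤ n) (r : ℕ) (u : ℝ) :
    betaCDF n r u
      = ∑ k : Fin (n + 1), binomPMF n u k *
          (if (r : ℝ) / n ≤ (k : ℝ) / n then (1 : ℝ) else 0) := by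
  classical
  have hnpos : (0 : ℝ) < n := by exact_mod_cast hn
  have hcond : ∀ k : ℕ, ((r : ℝ) / n ≤ (k : ℝ) / n) ↔ r ≤ k := by
    intro k
    constructor
    · intro h
      exact_mod_cast (div_le_div_iff_of_pos_right hnpos).mp h
    · intro h
      exact (div_le_div_iff_of_pos_right hnpos).mpr (by exact_mod_cast h)
  have hfilt : (Finset.range (n + 1)).filter (fun k => r ≤ k) = Finset.Icc r n := by
    ext k; simp [Nat.lt_succ_iff, and_comm]
  have key : ∑ k : Fin (n + 1), binomPMF n u k *
          (if (r : ℝ) / n ≤ (k : ℝ) / n then (1 : ℝ) else 0)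
      = betaCDF n r u := by
    rw [Fin.sum_univ_eq_sum_range (fun k => binomPMF n u k *
        (if (r : ℝ) / n ≤ (k : ℝ) / n then (1 : ℝ) else 0))]
    calc ∑ k ∈ Finset.range (n + 1), binomPMF n u k *
          (if (r : ℝ) / n ≤ (k : ℝ) / n then (1 : ℝ) else 0)
        = ∑ k ∈ Finset.range (n + 1), (if r ≤ k then binomPMF n u k else 0) := by
          refine Finset.sum_congr rfl fun k _ => ?_
          by_cases h : r ≤ k
          · rw [if_pos ((hcond k).mpr h), if_pos h, mul_one]
          · rw [if_neg (fun hc => h ((hcond k).mp hc)), if_neg h, mul_zero]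
      _ = ∑ k ∈ (Finset.range (n + 1)).filter (fun k => r ≤ k), binomPMF n u k := by
          rw [Finset.sum_filter]
      _ = betaCDF n r u := by
          rw [hfilt]; unfold betaCDF binomPMF
          exact Finset.sum_congr rfl fun k _ => rfl
  exact key.symm

/-- Binomial smoothing: `ℂₙ^β(u) = E[C̃ₙ(S₁/n, …, S_d/n)]` where `S₁,…,S_d` are
independent with `Sⱼ ~ Binomial(n, uⱼ)`; the expectation is the finite sum over all
possible values `s : Fin d → {0,…,n}` weighted by `∏ⱼ P(Sⱼ = sⱼ)`. -/
theorem empBetaCopula_eq_binomial_smoothing (n d : ℕ) (hn : 1 ≤ n)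
    (R : Fin n → Fin d → ℕ) (hmem : ∀ i j, R i j ∈ Finset.Icc 1 n)
    (u : Fin d → ℝ) (hu : ∀ j, u j ∈ Set.Icc (0 : ℝ) 1) :
    empBetaCopula n d R u
      = ∑ s : Fin d → Fin (n + 1),
          (∏ j : Fin d, binomPMF n (u j) (s j)) *
            rankCopula n d R (fun j => (s j : ℝ) / n) := by
  classical
  unfold empBetaCopula rankCopula
  have key : ∀ i : Fin n, ∏ j : Fin d, betaCDF n (R i j) (u j)
      = ∑ s : Fin d → Fin (n + 1),
          (∏ j : Fin d, binomPMF n (u j) (s j)) *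
            ∏ j : Fin d, (if (R i j : ℝ) / n ≤ ((s j : ℕ) : ℝ) / n then (1 : ℝ) else 0) := by
    intro i
    calc ∏ j : Fin d, betaCDF n (R i j) (u j)
        = ∏ j : Fin d, ∑ k : Fin (n + 1), binomPMF n (u j) k *
            (if (R i j : ℝ) / n ≤ (k : ℝ) / n then (1 : ℝ) else 0) :=
          Finset.prod_congr rfl fun j _ => betaCDF_eq_sum_aux n hn (R i j) (u j)
      _ = ∑ s ∈ Fintype.piFinset (fun _ : Fin d => (Finset.univ : Finset (Fin (n + 1)))),
            ∏ j : Fin d, binomPMF n (u j) (s j) *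
              (if (R i j : ℝ) / n ≤ ((s j : ℕ) : ℝ) / n then (1 : ℝ) else 0) :=
          Finset.prod_univ_sum _ _
      _ = ∑ s : Fin d → Fin (n + 1),
            (∏ j : Fin d, binomPMF n (u j) (s j)) *
              ∏ j : Fin d, (if (R i j : ℝ) / n ≤ ((s j : ℕ) : ℝ) / n then (1 : ℝ) else 0) := by
          rw [Fintype.piFinset_univ]
          exact Finset.sum_congr rfl fun s _ => Finset.prod_mul_distrib
  calc (1 / (n : ℝ)) * ∑ i : Fin n, ∏ j : Fin d, betaCDF n (R i j) (u j)
      = (1 / (n : ℝ)) * ∑ i : Fin n, ∑ s : Fin d → Fin (n + 1),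
          (∏ j : Fin d, binomPMF n (u j) (s j)) *
            ∏ j : Fin d, (if (R i j : ℝ) / n ≤ ((s j : ℕ) : ℝ) / n then (1 : ℝ) else 0) := by
        rw [Finset.sum_congr rfl fun i _ => key i]
    _ = (1 / (n : ℝ)) * ∑ s : Fin d → Fin (n + 1), ∑ i : Fin n,
          (∏ j : Fin d, binomPMF n (u j) (s j)) *
            ∏ j : Fin d, (if (R i j : ℝ) / n ≤ ((s j : ℕ) : ℝ) / n then (1 : ℝ) else 0) := by
        rw [Finset.sum_comm]
    _ = ∑ s : Fin d → Fin (n + 1),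
          (∏ j : Fin d, binomPMF n (u j) (s j)) *
            ((1 / (n : ℝ)) * ∑ i : Fin n,
              ∏ j : Fin d, (if (R i j : ℝ) / n ≤ ((s j : ℕ) : ℝ) / n then (1 : ℝ) else 0)) := by
        rw [Finset.mul_sum]
        refine Finset.sum_congr rfl fun s _ => ?_
        rw [← Finset.mul_sum]
        ring
    _ = ∑ s : Fin d → Fin (n + 1),
          (∏ j : Fin d, binomPMF n (u j) (s j)) *
            ((1 / (n : ℝ)) * ∑ i : Fin n,
              ∏ j : Fin d, (if (R i j : ℝ) / n ≤ (fun j => ((s j : ℕ) : ℝ) / n) j then (1 : ℝ) else 0)) :=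
        rfl
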